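/- Let C be an [n,k;n_1,…,n_ℓ] sum-rank metric code over (F;K_1,…,K_ℓ) and let ρ_C be the rank function of the associated sum-matroid, with nullity η_C(L) = Rk(L) − ρ_C(L). Then for every L ∈ P(K^n), η_C(L) = dim_F(C ∩ V_L). -/

import Mathlib

open Module

/-! Setup for sum-rank metric codes and sum-matroids.

We fix `ℓ` finite fields `K i` with a common extension `F` (given by algebra
structures), and block lengths `nv i`.  The ambient space `F^n` (with
`n = ∑ i, nv i`) is modelled as the dependent product of the blocks `F^{nv i}`,
and an element of the product lattice `P(K^n)` is a tuple of `K i`-subspaces of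
`K i ^ (nv i)`. -/

/-- The ambient space `F^n`, split into `ℓ` blocks of sizes `nv i`. -/
abbrev SRAmb (ℓ : ℕ) (nv : Fin ℓ → ℕ) (F : Type) : Type :=
  (i : Fin ℓ) → Fin (nv i) → F

/-- The product lattice `P(K^n)`: tuples `L` where `L i` is a `K i`-subspace of
`K i ^ (nv i)`. -/
abbrev SRLat (ℓ : ℕ) (nv : Fin ℓ → ℕ) (K : Fin ℓ → Type) [∀ i, Field (K i)] : Type :=
  (i : Fin ℓ) → Submodule (K i) (Fin (nv i) → K i)

variable {ℓ : ℕ} {nv : Fin ℓ → ℕ} {F : Type} [Field F]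
  {K : Fin ℓ → Type} [∀ i, Field (K i)] [∀ i, Algebra (K i) F]

/-- `Rk(L) = ∑ i, dim_{K i} (L i)`. -/
noncomputable def SRrk (L : SRLat ℓ nv K) : ℕ := ∑ i, finrank (K i) (L i)

/-- Orthogonal complement of a subspace of `k^m` with respect to the standard
dot product. -/
def SRorth {k : Type} [Field k] {m : ℕ} (W : Submodule k (Fin m → k)) :
    Submodule k (Fin m → k) where
  carrier := {v | ∀ w ∈ W, ∑ t, v t * w t = 0}
  zero_mem' := by intro w hw; simp
  add_mem' := by
    intro a b ha hb w hw
    have h : ∑ t, (a + b) t * w t = (∑ t, a t * w t) + ∑ t, b t * w t := by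
      simp [add_mul, Finset.sum_add_distrib]
    rw [h, ha w hw, hb w hw, add_zero]
  smul_mem' := by
    intro c a ha w hw
    have h : ∑ t, (c • a) t * w t = c * ∑ t, a t * w t := by
      simp [Finset.mul_sum, mul_assoc]
    rw [h, ha w hw, mul_zero]

/-- Componentwise orthogonal complement `L^⊥` in the lattice `P(K^n)`. -/
def SRlatPerp (L : SRLat ℓ nv K) : SRLat ℓ nv K := fun i => SRorth (L i)

/-- The `i`-th component of the sum-rank support of `c ∈ F^n`: the `K i`-row
space of the coordinate matrix of the `i`-th block of `c` (described
basis-freely as the span of the images of the block of `c` under all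
`K i`-linear functionals `F → K i`). -/
def SRsupp (c : SRAmb ℓ nv F) (i : Fin ℓ) : Submodule (K i) (Fin (nv i) → K i) :=
  Submodule.span (K i) {v | ∃ f : F →ₗ[K i] K i, v = fun t => f (c i t)}

/-- The sum-rank weight `srank(c) = Rk(supp(c))`. -/
noncomputable def SRwt (c : SRAmb ℓ nv F) : ℕ :=
  ∑ i, finrank (K i) (SRsupp (K := K) c i)

/-- The sum-rank support space `V_L = {c ∈ F^n : supp(c) ⊆ L}`. -/
def SRVL (L : SRLat ℓ nv K) : Submodule F (SRAmb ℓ nv F) where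
  carrier := {c | ∀ i, SRsupp (K := K) c i ≤ L i}
  zero_mem' := by
    intro i
    apply Submodule.span_le.mpr
    rintro v ⟨f, rfl⟩
    have h : (fun t => f ((0 : SRAmb ℓ nv F) i t)) = (0 : Fin (nv i) → K i) := by
      funext t; simp
    rw [h]
    exact (L i).zero_mem
  add_mem' := by
    intro a b ha hb i
    apply Submodule.span_le.mpr
    rintro v ⟨f, rfl⟩
    have h : (fun t => f ((a + b) i t)) =
        (fun t => f (a i t)) + fun t => f (b i t) := by
      funext t; simp
    rw [h]
    exact (L i).add_mem (ha i (Submodule.subset_span ⟨f, rfl⟩))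
      (hb i (Submodule.subset_span ⟨f, rfl⟩))
  smul_mem' := by
    intro x a ha i
    apply Submodule.span_le.mpr
    rintro v ⟨f, rfl⟩
    have h : (fun t => f ((x • a) i t)) =
        fun t => (f.comp (LinearMap.mulLeft (K i) x)) (a i t) := by
      funext t; simp [smul_eq_mul]
    rw [h]
    exact ha i (Submodule.subset_span ⟨_, rfl⟩)

/-- The dual code `C^⊥` with respect to the standard bilinear form on `F^n`. -/
def SRdual (C : Submodule F (SRAmb ℓ nv F)) : Submodule F (SRAmb ℓ nv F) where
  carrier := {x | ∀ c ∈ C, ∑ i, ∑ t, x i t * c i t = 0}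
  zero_mem' := by intro c hc; simp
  add_mem' := by
    intro a b ha hb c hc
    have h : ∑ i, ∑ t, (a + b) i t * c i t =
        (∑ i, ∑ t, a i t * c i t) + ∑ i, ∑ t, b i t * c i t := by
      simp [add_mul, Finset.sum_add_distrib]
    rw [h, ha c hc, hb c hc, add_zero]
  smul_mem' := by
    intro x a ha c hc
    have h : ∑ i, ∑ t, (x • a) i t * c i t = x * ∑ i, ∑ t, a i t * c i t := by
      simp [Finset.mul_sum, mul_assoc]
    rw [h, ha c hc, mul_zero]

/-- `C(L) = {c ∈ C^⊥ : supp(c) ⊆ L^⊥} = C^⊥ ∩ V_{L^⊥}`. -/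
def SRCL (C : Submodule F (SRAmb ℓ nv F)) (L : SRLat ℓ nv K) :
    Submodule F (SRAmb ℓ nv F) :=
  SRdual C ⊓ SRVL (SRlatPerp L)

/-- The projection `Π_L : F^n → F^{Rk L}`, `x ↦ x Aᵀ`, where
`A = diag(A_1, …, A_ℓ)` and `A_i` is the matrix whose rows are the chosen basis
of `L i` over `K i`.  The target `F^{Rk L}` is indexed blockwise. -/
noncomputable def SRpi (L : SRLat ℓ nv K) :
    SRAmb ℓ nv F →ₗ[F] ((i : Fin ℓ) → Fin (finrank (K i) (L i)) → F) where
  toFun x := fun i j =>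
    ∑ t, x i t * algebraMap (K i) F ((Module.finBasis (K i) (L i) j).val t)
  map_add' x y := by
    funext i j
    simp [add_mul, Finset.sum_add_distrib]
  map_smul' a x := by
    funext i j
    simp [Finset.mul_sum, mul_assoc]

/-- The rank function `ρ_C(L) = dim_F Π_L(C^⊥)` of the sum-matroid associated
to the code `C`. -/
noncomputable def SRrho (C : Submodule F (SRAmb ℓ nv F)) (L : SRLat ℓ nv K) : ℕ :=
  finrank F (Submodule.map (SRpi (F := F) L) (SRdual C))

/-- Minimum sum-rank distance of a code. -/
noncomputable def SRminDist (K : Fin ℓ → Type) [∀ i, Field (K i)]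
    [∀ i, Algebra (K i) F] (C : Submodule F (SRAmb ℓ nv F)) : ℕ :=
  sInf {w | ∃ c ∈ C, c ≠ 0 ∧ SRwt (K := K) c = w}

/-- The `r`-th generalized sum-rank weight
`d_{SR,r}(C) = min{Rk L : dim_F (C ∩ V_L) ≥ r}`. -/
noncomputable def SRdgw (K : Fin ℓ → Type) [∀ i, Field (K i)]
    [∀ i, Algebra (K i) F] (C : Submodule F (SRAmb ℓ nv F)) (r : ℕ) : ℕ :=
  sInf {w | ∃ L : SRLat ℓ nv K, r ≤ finrank F ↥(C ⊓ SRVL L) ∧ SRrk L = w}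

/-- The sum-matroid axioms (R1), (R2), (R3) for a function `ρ : P(K^n) → ℕ`. -/
def IsSumMatroid (ρ : SRLat ℓ nv K → ℕ) : Prop :=
  (∀ L, ρ L ≤ SRrk L) ∧
  (∀ L L' : SRLat ℓ nv K, L ≤ L' → ρ L ≤ ρ L') ∧
  (∀ L L' : SRLat ℓ nv K, ρ (L ⊔ L') + ρ (L ⊓ L') ≤ ρ L + ρ L')

/-- The dual rank function `ρ*(L) = ρ(L^⊥) + Rk L − ρ(K^n)`. -/
noncomputable def SRdualRk (ρ : SRLat ℓ nv K → ℕ) (L : SRLat ℓ nv K) : ℕ :=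
  ρ (SRlatPerp L) + SRrk L - ρ ⊤

/-- The nullity function `η(L) = Rk L − ρ(L)`. -/
noncomputable def SReta (ρ : SRLat ℓ nv K → ℕ) (L : SRLat ℓ nv K) : ℕ :=
  SRrk L - ρ L

/-- The `i`-th generalized weight of a sum-matroid,
`d_i(M) = min{Rk L : η(L) = i}`. -/
noncomputable def SRgw (ρ : SRLat ℓ nv K → ℕ) (i : ℕ) : ℕ :=
  sInf {w | ∃ L : SRLat ℓ nv K, SReta ρ L = i ∧ SRrk L = w}


section Dot
variable (k : Type) [Field k] (m : ℕ)

/-- dot product bilinear form on `k^m` -/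
noncomputable def dotB : LinearMap.BilinForm k (Fin m → k) :=
  LinearMap.mk₂ k (fun x y => ∑ t, x t * y t)
    (fun x x' y => by simp [add_mul, Finset.sum_add_distrib])
    (fun c x y => by simp [Finset.mul_sum, smul_eq_mul, mul_assoc])
    (fun x y y' => by simp [mul_add, Finset.sum_add_distrib])
    (fun c x y => by simp [Finset.mul_sum, smul_eq_mul, mul_left_comm])

variable {k m}

lemma dotB_apply (x y : Fin m → k) : dotB k m x y = ∑ t, x t * y t := rfl

lemma dotB_refl : (dotB k m).IsRefl := by
  intro x y h
  rw [dotB_apply] at h ⊢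
  rw [← h]
  exact Finset.sum_congr rfl (fun t _ => mul_comm _ _)

lemma dotB_nondeg : (dotB k m).Nondegenerate := by
  have hl : LinearMap.SeparatingLeft (dotB k m) := by
    intro x hx
    funext t
    have := hx (Pi.single t 1)
    rw [dotB_apply] at this
    rw [Finset.sum_eq_single t (fun s _ hs => by simp [Pi.single_eq_of_ne hs])
      (by simp)] at this
    simpa using this
  exact ⟨hl, fun y hy => hl y fun x => dotB_refl x y (hy x)⟩

lemma SRorth_eq (W : Submodule k (Fin m → k)) : SRorth W = (dotB k m).orthogonal W := by
  ext v
  constructor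
  · intro hv w hw
    show dotB k m w v = 0
    rw [dotB_apply, ← hv w hw]
    exact Finset.sum_congr rfl (fun t _ => mul_comm _ _)
  · intro hv w hw
    have : ∑ t, w t * v t = 0 := hv w hw
    rw [← this]
    exact Finset.sum_congr rfl (fun t _ => mul_comm _ _)

lemma finrank_SRorth_add (W : Submodule k (Fin m → k)) :
    finrank k (SRorth W) + finrank k W = m := by
  rw [SRorth_eq]
  have h := LinearMap.BilinForm.finrank_orthogonal dotB_nondeg W
  have hle : finrank k W ≤ finrank k (Fin m → k) := Submodule.finrank_le W
  have hm : finrank k (Fin m → k) = m := by simp [Module.finrank_pi]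
  omega

end Dot

section Block
variable {F : Type} [Field F] {k : Type} [Field k] [Algebra k F] {m : ℕ}

/-- coordinatewise embedding of `k`-vectors into `F`-vectors -/
def embK (k : Type) [Field k] [Algebra k F] {ι : Type} (w : ι → k) : ι → F :=
  fun t => algebraMap k F (w t)

lemma dual_sum_eq {ι : Type} [Fintype ι] (f : F →ₗ[k] k) (c : ι → F) (w : ι → k) :
    f (∑ t, c t * algebraMap k F (w t)) = ∑ t, f (c t) * w t := by
  rw [map_sum]
  refine Finset.sum_congr rfl (fun t _ => ?_)
  rw [mul_comm, ← Algebra.smul_def, map_smul, smul_eq_mul, mul_comm]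

/-- The `F`-span of (the embedding of) a `k`-subspace of `k^m`. -/
def blockSpan (W : Submodule k (Fin m → k)) : Submodule F (Fin m → F) :=
  Submodule.span F (embK k '' (W : Set (Fin m → k)))

lemma mem_blockSpan_iff [FiniteDimensional k F] (W : Submodule k (Fin m → k))
    (c : Fin m → F) :
    c ∈ blockSpan (F := F) W ↔ ∀ f : F →ₗ[k] k, (fun t => f (c t)) ∈ W := by
  constructor
  · intro hc
    induction hc using Submodule.span_induction with
    | mem x hx =>
      obtain ⟨w, hw, rfl⟩ := hx
      intro f
      have h : (fun t => f (embK k w t)) = f 1 • w := by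
        funext t
        simp [embK, Algebra.algebraMap_eq_smul_one, map_smul, smul_eq_mul, mul_comm]
      rw [h]
      exact W.smul_mem _ hw
    | zero =>
      intro f
      have h : (fun t => f ((0 : Fin m → F) t)) = (0 : Fin m → k) := by
        funext t; simp
      rw [h]; exact W.zero_mem
    | add x y hx hy ihx ihy =>
      intro f
      have h : (fun t => f ((x + y) t)) = (fun t => f (x t)) + fun t => f (y t) := by
        funext t; simp
      rw [h]; exact W.add_mem (ihx f) (ihy f)
    | smul a x hx ih =>
      intro f
      have h : (fun t => f ((a • x) t)) =
          fun t => (f.comp (LinearMap.mulLeft k a)) (x t) := by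
        funext t; simp [smul_eq_mul]
      rw [h]; exact ih _
  · intro h
    classical
    set e := Module.finBasis k F with he
    have hc : c = ∑ s, e s • embK k (fun t => e.repr (c t) s) := by
      funext t
      simp only [Finset.sum_apply, Pi.smul_apply, embK, smul_eq_mul]
      rw [Finset.sum_congr rfl (fun s _ => by rw [mul_comm, ← Algebra.smul_def] :
        ∀ s ∈ Finset.univ, e s * algebraMap k F (e.repr (c t) s) = e.repr (c t) s • e s)]
      exact (e.sum_repr (c t)).symm
    rw [hc]
    refine Submodule.sum_mem _ (fun s _ => Submodule.smul_mem _ _ (Submodule.subset_span ?_))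
    refine ⟨fun t => e.repr (c t) s, ?_, rfl⟩
    simpa [Basis.coord_apply] using h (e.coord s)

lemma finrank_blockSpan [FiniteDimensional k F] (W : Submodule k (Fin m → k)) :
    finrank F (blockSpan (F := F) W) = finrank k W := by
  classical
  set b := Module.finBasis k W with hb
  set v : Fin (finrank k ↥W) → (Fin m → F) := fun j => embK k ((b j : Fin m → k)) with hv
  have hindep : LinearIndependent F v := by
    rw [Fintype.linearIndependent_iff]
    intro g hg j
    have key : ∀ f : F →ₗ[k] k, f (g j) = 0 := by
      intro f
      have hsum : ∑ j', f (g j') • b j' = (0 : W) := by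
        apply Subtype.ext
        show ((∑ j', f (g j') • b j' : W) : Fin m → k) = 0
        funext t
        have ht : ∑ j', g j' * algebraMap k F ((b j' : Fin m → k) t) = 0 := by
          have := congrFun hg t
          simpa [hv, embK] using this
        have := dual_sum_eq f g (fun j' => (b j' : Fin m → k) t)
        rw [ht, map_zero] at this
        simpa using this.symm
      exact Fintype.linearIndependent_iff.mp b.linearIndependent _ hsum j
    exact (Module.forall_dual_apply_eq_zero_iff k (g j)).mp key
  have hspan : blockSpan (F := F) W = Submodule.span F (Set.range v) := by
    apply le_antisymm
    · rw [blockSpan, Submodule.span_le]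
      rintro x ⟨w, hw, rfl⟩
      have hrepr : embK (F := F) k w = ∑ j, algebraMap k F (b.repr ⟨w, hw⟩ j) • v j := by
        funext t
        simp only [Finset.sum_apply, Pi.smul_apply, hv, embK, smul_eq_mul, ← map_mul]
        rw [← map_sum]
        congr 1
        have h1 := congrArg (fun z => ((z : W) : Fin m → k) t) (b.sum_repr ⟨w, hw⟩)
        have h2 := h1.symm
        simp only [Submodule.coe_sum, Submodule.coe_smul, Finset.sum_apply, Pi.smul_apply,
          smul_eq_mul] at h2
        exact h2
      rw [hrepr]
      exact Submodule.sum_mem _ fun j _ =>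
        Submodule.smul_mem _ _ (Submodule.subset_span ⟨j, rfl⟩)
    · rw [Submodule.span_le]
      rintro x ⟨j, rfl⟩
      exact Submodule.subset_span ⟨(b j : Fin m → k), (b j).2, rfl⟩
  rw [hspan, finrank_span_eq_card hindep, Fintype.card_fin]

end Block

section OrthChar
variable {F : Type} [Field F] {k : Type} [Field k] [Algebra k F] {m : ℕ}

lemma forall_dual_mem_SRorth_iff [FiniteDimensional k F] (W : Submodule k (Fin m → k))
    (c : Fin m → F) :
    (∀ f : F →ₗ[k] k, (fun t => f (c t)) ∈ SRorth W) ↔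
      ∀ w ∈ W, ∑ t, c t * algebraMap k F (w t) = 0 := by
  constructor
  · intro h w hw
    apply (Module.forall_dual_apply_eq_zero_iff k _).mp
    intro f
    rw [dual_sum_eq]
    exact h f w hw
  · intro h f w hw
    show ∑ t, f (c t) * w t = 0
    rw [← dual_sum_eq, h w hw, map_zero]

lemma submodule_eq_span_basis (W : Submodule k (Fin m → k)) :
    W = Submodule.span k
      (Set.range fun j => ((Module.finBasis k W j : W) : Fin m → k)) := by
  conv_lhs => rw [← Submodule.map_subtype_top W]
  rw [← (Module.finBasis k W).span_eq, Submodule.map_span]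
  congr 1
  rw [← Set.range_comp]
  rfl

end OrthChar

section Main
variable {ℓ : ℕ} {nv : Fin ℓ → ℕ} {F : Type} [Field F]
  {K : Fin ℓ → Type} [∀ i, Field (K i)] [∀ i, Algebra (K i) F]

lemma mem_SRVL_iff (M : SRLat ℓ nv K) (c : SRAmb ℓ nv F) :
    c ∈ SRVL M ↔ ∀ i, ∀ f : F →ₗ[K i] K i, (fun t => f (c i t)) ∈ M i := by
  constructor
  · intro h i f
    exact h i (Submodule.subset_span ⟨f, rfl⟩)
  · intro h i
    apply Submodule.span_le.mpr
    rintro v ⟨f, rfl⟩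
    exact h i f

/-- Linear equivalence between a pi-submodule and the product of its factors. -/
def piSubEquiv {R : Type} [Field R] {ι : Type} {V : ι → Type} [∀ i, AddCommGroup (V i)]
    [∀ i, Module R (V i)] (p : ∀ i, Submodule R (V i)) :
    ↥(Submodule.pi Set.univ p) ≃ₗ[R] ((i : ι) → ↥(p i)) where
  toFun x := fun i => ⟨x.1 i, x.2 i (Set.mem_univ i)⟩
  map_add' x y := rfl
  map_smul' c x := rfl
  invFun y := ⟨fun i => (y i).1, fun i _ => (y i).2⟩
  left_inv x := rfl
  right_inv y := rfl

lemma SRVL_eq_pi [∀ i, FiniteDimensional (K i) F] (M : SRLat ℓ nv K) :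
    SRVL M = Submodule.pi Set.univ (fun i => blockSpan (F := F) (M i)) := by
  ext c
  rw [mem_SRVL_iff, Submodule.mem_pi]
  constructor
  · intro h i _
    exact (mem_blockSpan_iff _ _).mpr (h i)
  · intro h i
    exact (mem_blockSpan_iff _ _).mp (h i (Set.mem_univ i))

lemma finrank_SRVL [∀ i, FiniteDimensional (K i) F] (M : SRLat ℓ nv K) :
    finrank F (SRVL (F := F) (K := K) M) = SRrk M := by
  rw [SRVL_eq_pi, (piSubEquiv _).finrank_eq, Module.finrank_pi_fintype, SRrk]
  exact Finset.sum_congr rfl (fun i _ => finrank_blockSpan (M i))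

lemma mem_SRVL_perp_iff [∀ i, FiniteDimensional (K i) F] (M : SRLat ℓ nv K)
    (c : SRAmb ℓ nv F) :
    c ∈ SRVL (SRlatPerp M) ↔
      ∀ i, ∀ w ∈ M i, ∑ t, c i t * algebraMap (K i) F (w t) = 0 := by
  rw [mem_SRVL_iff]
  exact forall_congr' fun i => forall_dual_mem_SRorth_iff (M i) (c i)

lemma ker_SRpi [∀ i, FiniteDimensional (K i) F] (L : SRLat ℓ nv K) :
    LinearMap.ker (SRpi (F := F) L) = SRVL (SRlatPerp L) := by
  ext c
  rw [LinearMap.mem_ker, mem_SRVL_perp_iff]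
  constructor
  · intro h i w hw
    rw [submodule_eq_span_basis (L i)] at hw
    have key : ∀ u, u ∈ Submodule.span (K i)
        (Set.range fun j => ((Module.finBasis (K i) (L i) j : L i) : Fin (nv i) → K i)) →
        ∑ t, c i t * algebraMap (K i) F (u t) = 0 := by
      intro u hu
      induction hu using Submodule.span_induction with
      | mem x hx =>
        obtain ⟨j, rfl⟩ := hx
        have := congrFun (congrFun h i) j
        simpa [SRpi] using this
      | zero => simp
      | add x y hx hy ihx ihy =>
        have hxy : ∑ t, c i t * algebraMap (K i) F ((x + y) t)
            = (∑ t, c i t * algebraMap (K i) F (x t))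
              + ∑ t, c i t * algebraMap (K i) F (y t) := by
          simp [map_add, mul_add, Finset.sum_add_distrib]
        rw [hxy, ihx, ihy, add_zero]
      | smul a x hx ih =>
        have hax : ∑ t, c i t * algebraMap (K i) F ((a • x) t)
            = algebraMap (K i) F a * ∑ t, c i t * algebraMap (K i) F (x t) := by
          simp only [Pi.smul_apply, smul_eq_mul, map_mul, Finset.mul_sum]
          exact Finset.sum_congr rfl fun t _ => by ring
        rw [hax, ih, mul_zero]
    exact key w hw
  · intro h
    funext i j
    exact h i _ (Module.finBasis (K i) (L i) j).2

/-- dot product bilinear form on the ambient product space -/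
noncomputable def pdotB (ℓ : ℕ) (nv : Fin ℓ → ℕ) (F : Type) [Field F] :
    LinearMap.BilinForm F (SRAmb ℓ nv F) :=
  LinearMap.mk₂ F (fun x y => ∑ i, ∑ t, x i t * y i t)
    (fun x x' y => by simp [add_mul, Finset.sum_add_distrib])
    (fun c x y => by simp [Finset.mul_sum, smul_eq_mul, mul_assoc])
    (fun x y y' => by simp [mul_add, Finset.sum_add_distrib])
    (fun c x y => by simp [Finset.mul_sum, smul_eq_mul, mul_left_comm])

lemma pdotB_apply (x y : SRAmb ℓ nv F) :
    pdotB ℓ nv F x y = ∑ i, ∑ t, x i t * y i t := rfl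

lemma pdotB_refl : (pdotB ℓ nv F).IsRefl := by
  intro x y h
  rw [pdotB_apply] at h ⊢
  rw [← h]
  exact Finset.sum_congr rfl fun i _ => Finset.sum_congr rfl fun t _ => mul_comm _ _

lemma pdotB_nondeg : (pdotB ℓ nv F).Nondegenerate := by
  have hl : LinearMap.SeparatingLeft (pdotB ℓ nv F) := by
    intro x hx
    funext i t
    have h := hx (Pi.single i (Pi.single t 1))
    rw [pdotB_apply] at h
    rw [Finset.sum_eq_single i (fun i' _ hi' => by simp [Pi.single_eq_of_ne hi'])
      (by simp)] at h
    rw [Pi.single_eq_same, Finset.sum_eq_single t (fun t' _ ht' => by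
      simp [Pi.single_eq_of_ne ht']) (by simp)] at h
    simpa using h
  exact ⟨hl, fun y hy => hl y fun x => pdotB_refl x y (hy x)⟩

lemma SRdual_eq (C : Submodule F (SRAmb ℓ nv F)) :
    SRdual C = (pdotB ℓ nv F).orthogonal C := by
  ext x
  constructor
  · intro hx c hc
    show pdotB ℓ nv F c x = 0
    rw [pdotB_apply, ← hx c hc]
    exact Finset.sum_congr rfl fun i _ => Finset.sum_congr rfl fun t _ => mul_comm _ _
  · intro hx c hc
    have h : ∑ i, ∑ t, c i t * x i t = 0 := hx c hc
    show ∑ i, ∑ t, x i t * c i t = 0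
    rw [← h]
    exact Finset.sum_congr rfl fun i _ => Finset.sum_congr rfl fun t _ => mul_comm _ _

lemma myOrthSup {R V : Type} [Field R] [AddCommGroup V] [Module R V]
    (B : LinearMap.BilinForm R V) (p q : Submodule R V) :
    B.orthogonal (p ⊔ q) = B.orthogonal p ⊓ B.orthogonal q := by
  refine le_antisymm
    (le_inf (B.orthogonal_le le_sup_left) (B.orthogonal_le le_sup_right)) ?_
  intro x hx n hn
  rcases Submodule.mem_sup.mp hn with ⟨a, ha, b, hb, rfl⟩
  show B (a + b) x = 0
  rw [map_add, LinearMap.add_apply, hx.1 a ha, hx.2 b hb, add_zero]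

lemma finrank_SRAmb : finrank F (SRAmb ℓ nv F) = ∑ i, nv i := by
  rw [Module.finrank_pi_fintype]
  simp [Module.finrank_pi]

lemma finrank_orth_add (X : Submodule F (SRAmb ℓ nv F)) :
    finrank F ((pdotB ℓ nv F).orthogonal X) + finrank F X = ∑ i, nv i := by
  have h := LinearMap.BilinForm.finrank_orthogonal (pdotB_nondeg (ℓ := ℓ) (nv := nv) (F := F))
    X
  have hle : finrank F X ≤ finrank F (SRAmb ℓ nv F) := Submodule.finrank_le X
  have hN := finrank_SRAmb (ℓ := ℓ) (nv := nv) (F := F)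
  omega

lemma SRrk_add_perp (M : SRLat ℓ nv K) : SRrk (SRlatPerp M) + SRrk M = ∑ i, nv i := by
  rw [SRrk, SRrk, ← Finset.sum_add_distrib]
  exact Finset.sum_congr rfl fun i _ => finrank_SRorth_add (M i)

lemma orth_SRVL [∀ i, FiniteDimensional (K i) F] (M : SRLat ℓ nv K) :
    (pdotB ℓ nv F).orthogonal (SRVL M) = SRVL (SRlatPerp M) := by
  have hle : SRVL (SRlatPerp M) ≤ (pdotB ℓ nv F).orthogonal (SRVL M) := by
    intro c hc d hd
    show pdotB ℓ nv F d c = 0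
    rw [pdotB_apply]
    rw [mem_SRVL_perp_iff] at hc
    have hd' := (mem_SRVL_iff M d).mp hd
    refine Finset.sum_eq_zero fun i _ => ?_
    have hdi : d i ∈ blockSpan (F := F) (M i) := (mem_blockSpan_iff _ _).mpr (hd' i)
    have key : ∀ u, u ∈ blockSpan (F := F) (M i) → ∑ t, u t * c i t = 0 := by
      intro u hu
      induction hu using Submodule.span_induction with
      | mem x hx =>
        obtain ⟨w, hw, rfl⟩ := hx
        have h0 := hc i w hw
        rw [← h0]
        exact Finset.sum_congr rfl fun t _ => mul_comm _ _
      | zero => simp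
      | add x y hx hy ihx ihy => simp [add_mul, Finset.sum_add_distrib, ihx, ihy]
      | smul a x hx ih => simp [smul_eq_mul, mul_assoc, ← Finset.mul_sum, ih]
    exact key (d i) hdi
  refine (Submodule.eq_of_le_of_finrank_le hle ?_).symm
  have h1 := finrank_orth_add (SRVL (F := F) (K := K) M)
  have h2 := finrank_SRVL (F := F) M
  have h3 := finrank_SRVL (F := F) (SRlatPerp M)
  have h4 := SRrk_add_perp M
  omega

lemma SRlatPerp_perp (L : SRLat ℓ nv K) : SRlatPerp (SRlatPerp L) = L := by
  funext i
  show SRorth (SRorth (L i)) = L i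
  rw [SRorth_eq, SRorth_eq]
  exact LinearMap.BilinForm.orthogonal_orthogonal dotB_nondeg dotB_refl (L i)

lemma finrank_map_add_inf_ker {V W : Type} [AddCommGroup V] [Module F V]
    [AddCommGroup W] [Module F W] [FiniteDimensional F V]
    (f : V →ₗ[F] W) (p : Submodule F V) :
    finrank F (p.map f) + finrank F ↥(p ⊓ LinearMap.ker f) = finrank F p := by
  have h := LinearMap.finrank_range_add_finrank_ker (f.domRestrict p)
  rw [LinearMap.range_domRestrict, LinearMap.ker_domRestrict] at h
  have h2 : finrank F ↥(p ⊓ LinearMap.ker f)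
      = finrank F ((LinearMap.ker f).comap p.subtype) := by
    rw [← Submodule.map_comap_subtype, Submodule.finrank_map_subtype_eq]
  rw [h2, ← h]

end Main

/-- For the sum-matroid associated to a sum-rank metric code
`C`, the nullity satisfies `η_C(L) = dim_F (C ∩ V_L)` for every
`L ∈ P(K^n)`. -/
theorem stmt10_nullity_eq_dim_inter
    {ℓ : ℕ} (hℓ : 0 < ℓ) {nv : Fin ℓ → ℕ} (hnv : ∀ i, 0 < nv i)
    {F : Type} [Field F] [Finite F]
    {K : Fin ℓ → Type} [∀ i, Field (K i)] [∀ i, Finite (K i)]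
    [∀ i, Algebra (K i) F] [∀ i, FiniteDimensional (K i) F]
    (C : Submodule F (SRAmb ℓ nv F)) (k : ℕ) (hk : Module.finrank F C = k)
    (L : SRLat ℓ nv K) :
    SRrk L - SRrho C L = Module.finrank F ↥(C ⊓ SRVL L) := by
  have e1 : finrank F (Submodule.map (SRpi (F := F) L) (SRdual C)) +
      finrank F ↥(SRdual C ⊓ SRVL (SRlatPerp L)) = finrank F (SRdual C) := by
    have h := finrank_map_add_inf_ker (SRpi (F := F) L) (SRdual C)
    rwa [ker_SRpi] at h
  have e2 : finrank F (SRdual C) + finrank F C = ∑ i, nv i := by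
    rw [SRdual_eq]
    exact finrank_orth_add C
  have e3 : C ⊓ SRVL L
      = (pdotB ℓ nv F).orthogonal (SRdual C ⊔ SRVL (SRlatPerp L)) := by
    rw [myOrthSup, SRdual_eq,
      LinearMap.BilinForm.orthogonal_orthogonal pdotB_nondeg pdotB_refl,
      orth_SRVL, SRlatPerp_perp]
  have e4 : finrank F ↥(C ⊓ SRVL L)
      + finrank F ↥(SRdual C ⊔ SRVL (SRlatPerp L)) = ∑ i, nv i := by
    rw [e3]
    exact finrank_orth_add _
  have e5 := Submodule.finrank_sup_add_finrank_inf_eq (SRdual C) (SRVL (SRlatPerp L))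
  have e6 : finrank F (SRVL (F := F) (SRlatPerp (K := K) L)) + SRrk L = ∑ i, nv i := by
    rw [finrank_SRVL]
    exact SRrk_add_perp L
  unfold SRrho
  omega
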